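/- Let u : ℝ^d → ℝ be continuously differentiable, μ-strongly convex and L-smooth with 0 < μ ≤ L, and let x* be its unique minimizer. For step size 0 < η ≤ 2/L, any point x ∈ ℝ^d, and any random vectors ξ (with E[ξ] = 0, E‖ξ‖² ≤ σ²) and w ~ N(0, I_d) independent of ξ, the update x⁺ = x − η∇u(x) − ηξ + √(2η)·w satisfies E‖x⁺ − x*‖² ≤ (1 − 2μη(1 − ηL/2))·‖x − x*‖² + η²σ² + 2ηd. -/

import Mathlib

open MeasureTheory ProbabilityTheory

section SGLDAux

open Real Filter

-- Gaussian real facts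
lemma gauss_exp_tendsto : Tendsto (fun t : ℝ => Real.exp (-(1/2) * t ^ 2)) (Filter.cocompact ℝ) (nhds 0) := by
  have h := tendsto_rpow_abs_mul_exp_neg_mul_sq_cocompact (a := 1/2) (by norm_num) 0
  simpa using h

lemma gauss_lin_tendsto : Tendsto (fun t : ℝ => t * Real.exp (-(1/2) * t ^ 2)) (Filter.cocompact ℝ) (nhds 0) := by
  have h := tendsto_rpow_abs_mul_exp_neg_mul_sq_cocompact (a := 1/2) (by norm_num) 1
  rw [tendsto_zero_iff_norm_tendsto_zero]
  refine h.congr fun t => ?_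
  simp [abs_mul, abs_of_nonneg (Real.exp_nonneg _)]

lemma gauss_J0 : ∫ t : ℝ, Real.exp (-(1/2) * t ^ 2) = Real.sqrt (2 * Real.pi) := by
  have := integral_gaussian (1/2)
  rw [this, show (Real.pi/(1/2):ℝ) = 2*Real.pi by ring]

lemma gauss_int_sq : Integrable (fun t : ℝ => t ^ 2 * Real.exp (-(1/2) * t ^ 2)) := by
  have h := integrable_rpow_mul_exp_neg_mul_sq (b := 1/2) (by norm_num) (s := 2) (by norm_num)
  have he : (fun x : ℝ => x ^ (2:ℝ) * Real.exp (-(1/2) * x ^ 2)) = fun x : ℝ => x ^ 2 * Real.exp (-(1/2) * x ^ 2) := by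
    funext x
    rw [← Real.rpow_natCast x 2]
    norm_num
  exact he ▸ h

lemma gauss_J1 : ∫ t : ℝ, t * Real.exp (-(1/2) * t ^ 2) = 0 := by
  have hderiv : ∀ t : ℝ, HasDerivAt (fun t : ℝ => -Real.exp (-(1/2) * t ^ 2)) (t * Real.exp (-(1/2) * t ^ 2)) t := by
    intro t
    have h1 : HasDerivAt (fun t : ℝ => -(1/2) * t ^ 2) (-(1/2) * (2 * t)) t := by
      simpa using (hasDerivAt_pow 2 t).const_mul (-(1/2) : ℝ)
    have h2 := h1.exp
    refine h2.fun_neg.congr_deriv ?_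
    ring
  have hint : Integrable (fun t : ℝ => t * Real.exp (-(1/2) * t ^ 2)) :=
    integrable_mul_exp_neg_mul_sq (by norm_num)
  have hcc : Filter.cocompact ℝ = atBot ⊔ atTop := cocompact_eq_atBot_atTop
  have hlim := gauss_exp_tendsto.neg
  rw [hcc, tendsto_sup] at hlim
  have := integral_of_hasDerivAt_of_tendsto hderiv hint hlim.1 hlim.2
  simpa using this

lemma gauss_J2 : ∫ t : ℝ, t ^ 2 * Real.exp (-(1/2) * t ^ 2) = Real.sqrt (2 * Real.pi) := by
  have hderiv : ∀ t : ℝ, HasDerivAt (fun t : ℝ => -(t * Real.exp (-(1/2) * t ^ 2)))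
      (t ^ 2 * Real.exp (-(1/2) * t ^ 2) - Real.exp (-(1/2) * t ^ 2)) t := by
    intro t
    have h1 : HasDerivAt (fun t : ℝ => -(1/2) * t ^ 2) (-(1/2) * (2 * t)) t := by
      simpa using (hasDerivAt_pow 2 t).const_mul (-(1/2) : ℝ)
    have h2 := (hasDerivAt_id t).mul h1.exp
    refine h2.fun_neg.congr_deriv ?_
    simp only [id_eq]
    ring
  have hexp : Integrable (fun t : ℝ => Real.exp (-(1/2) * t ^ 2)) :=
    integrable_exp_neg_mul_sq (by norm_num)
  have hint := gauss_int_sq.sub hexp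
  have hcc : Filter.cocompact ℝ = atBot ⊔ atTop := cocompact_eq_atBot_atTop
  have hlim := gauss_lin_tendsto.neg
  rw [hcc, tendsto_sup] at hlim
  have h := integral_of_hasDerivAt_of_tendsto hderiv hint hlim.1 hlim.2
  have h2 : (∫ t : ℝ, t ^ 2 * Real.exp (-(1/2) * t ^ 2)) - ∫ t : ℝ, Real.exp (-(1/2) * t ^ 2) = 0 := by
    rw [← integral_sub gauss_int_sq hexp]; simpa using h
  have := gauss_J0
  linarith

noncomputable def gpdf : ℝ → NNReal := fun t => Real.toNNReal (gaussianPDFReal 0 1 t)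

lemma gpdf_meas : Measurable gpdf := (measurable_gaussianPDFReal 0 1).real_toNNReal

lemma gauss_withDensity : gaussianReal 0 1 = (volume : Measure ℝ).withDensity (fun t => (gpdf t : ENNReal)) := by
  rw [gaussianReal_of_var_ne_zero 0 one_ne_zero]
  rfl

lemma gpdf_coe (t : ℝ) : (gpdf t : ℝ) = (Real.sqrt (2 * Real.pi))⁻¹ * Real.exp (-(1/2) * t ^ 2) := by
  rw [gpdf, Real.coe_toNNReal _ (gaussianPDFReal_nonneg 0 1 t), gaussianPDFReal]
  simp only [NNReal.coe_one, mul_one, sub_zero]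
  rw [show -t ^ 2 / 2 = -(1/2) * t ^ 2 by ring]

lemma gauss_integrable_of (f : ℝ → ℝ) (hf : Integrable (fun t => f t * Real.exp (-(1/2) * t ^ 2))) :
    Integrable f (gaussianReal 0 1) := by
  rw [gauss_withDensity, integrable_withDensity_iff gpdf_meas.coe_nnreal_ennreal
    (Filter.Eventually.of_forall fun t => ENNReal.coe_lt_top)]
  have : (fun t => f t * ((gpdf t : ENNReal)).toReal) = fun t => (Real.sqrt (2 * Real.pi))⁻¹ * (f t * Real.exp (-(1/2) * t ^ 2)) := by
    funext t
    rw [ENNReal.coe_toReal, gpdf_coe]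
    ring
  rw [this]
  exact hf.const_mul _

lemma gauss_integral_eq (f : ℝ → ℝ) :
    ∫ t, f t ∂(gaussianReal 0 1) = (Real.sqrt (2 * Real.pi))⁻¹ * ∫ t, f t * Real.exp (-(1/2) * t ^ 2) := by
  rw [gauss_withDensity]
  have h := integral_withDensity_eq_integral_smul (μ := (volume : Measure ℝ)) gpdf_meas f
  rw [h]
  have : (fun t => gpdf t • f t) = fun t => (Real.sqrt (2 * Real.pi))⁻¹ * (f t * Real.exp (-(1/2) * t ^ 2)) := by
    funext t
    rw [NNReal.smul_def, smul_eq_mul, gpdf_coe]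
    ring
  rw [this, integral_const_mul]

lemma sqrt_two_pi_pos : 0 < Real.sqrt (2 * Real.pi) :=
  Real.sqrt_pos.mpr (by positivity)

lemma gauss_integrable_id : Integrable (fun t : ℝ => t) (gaussianReal 0 1) :=
  gauss_integrable_of _ (integrable_mul_exp_neg_mul_sq (by norm_num))

lemma gauss_integral_id : ∫ t, t ∂(gaussianReal 0 1) = 0 := by
  rw [gauss_integral_eq, gauss_J1, mul_zero]

lemma gauss_integrable_sq : Integrable (fun t : ℝ => t ^ 2) (gaussianReal 0 1) :=
  gauss_integrable_of _ gauss_int_sq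

lemma gauss_integral_sq : ∫ t, t ^ 2 ∂(gaussianReal 0 1) = 1 := by
  rw [gauss_integral_eq, gauss_J2, inv_mul_cancel₀ sqrt_two_pi_pos.ne']

lemma map_eval_pi {d : ℕ} (i : Fin d) :
    (Measure.pi (fun _ : Fin d => gaussianReal 0 1)).map (Function.eval i) = gaussianReal 0 1 := by
  ext s hs
  classical
  rw [Measure.map_apply (measurable_pi_apply i) hs, Set.eval_preimage, Measure.pi_pi]
  rw [Finset.prod_eq_single i (fun j _ hj => by simp [Function.update_of_ne hj])
    (fun h => absurd (Finset.mem_univ i) h)]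
  simp

section Wfacts

variable {d : ℕ} {Ω : Type*} [MeasurableSpace Ω] {μP : Measure Ω} [IsProbabilityMeasure μP]
  {w : Ω → EuclideanSpace ℝ (Fin d)}

lemma w_coord_law (hwm : Measurable w)
    (hw : Measure.map (fun ω => WithLp.ofLp (w ω)) μP = Measure.pi (fun _ : Fin d => gaussianReal 0 1)) (i : Fin d) :
    Measure.map (fun ω => w ω i) μP = gaussianReal 0 1 := by
  have : (fun ω => w ω i) = Function.eval i ∘ (fun ω => WithLp.ofLp (w ω)) := rfl
  rw [this, ← Measure.map_map (g := Function.eval i) (f := fun ω => WithLp.ofLp (w ω)) (measurable_pi_apply i) ((WithLp.measurable_ofLp 2 _).comp hwm), hw, _root_.map_eval_pi]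

lemma w_coord_meas (hwm : Measurable w) (i : Fin d) : Measurable (fun ω => w ω i) :=
  ((measurable_pi_apply i).comp ((WithLp.measurable_ofLp 2 _).comp hwm) : Measurable ((Function.eval i) ∘ (fun ω => WithLp.ofLp (w ω))))

lemma w_coord_trans_int (hwm : Measurable w)
    (hw : Measure.map (fun ω => WithLp.ofLp (w ω)) μP = Measure.pi (fun _ : Fin d => gaussianReal 0 1)) (i : Fin d)
    {f : ℝ → ℝ} (hf : Measurable f) (hfg : Integrable f (gaussianReal 0 1)) :
    Integrable (fun ω => f (w ω i)) μP := by
  have h := integrable_map_measure (g := f) (f := fun ω => w ω i) (μ := μP)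
    hf.aestronglyMeasurable (w_coord_meas hwm i).aemeasurable
  rw [w_coord_law hwm hw i] at h
  exact h.mp hfg

lemma w_coord_trans_integral (hwm : Measurable w)
    (hw : Measure.map (fun ω => WithLp.ofLp (w ω)) μP = Measure.pi (fun _ : Fin d => gaussianReal 0 1)) (i : Fin d)
    {f : ℝ → ℝ} (hf : Measurable f) :
    ∫ ω, f (w ω i) ∂μP = ∫ t, f t ∂(gaussianReal 0 1) := by
  have h := integral_map (φ := fun ω => w ω i) (μ := μP) (f := f)
    (w_coord_meas hwm i).aemeasurable
  rw [w_coord_law hwm hw i] at h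
  exact (h hf.aestronglyMeasurable).symm

lemma w_coord_int (hwm : Measurable w)
    (hw : Measure.map (fun ω => WithLp.ofLp (w ω)) μP = Measure.pi (fun _ : Fin d => gaussianReal 0 1)) (i : Fin d) :
    Integrable (fun ω => w ω i) μP :=
  w_coord_trans_int hwm hw i measurable_id' gauss_integrable_id

lemma w_coord_mean (hwm : Measurable w)
    (hw : Measure.map (fun ω => WithLp.ofLp (w ω)) μP = Measure.pi (fun _ : Fin d => gaussianReal 0 1)) (i : Fin d) :
    ∫ ω, w ω i ∂μP = 0 := by
  rw [w_coord_trans_integral hwm hw i measurable_id', gauss_integral_id]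

lemma w_coord_sq_int (hwm : Measurable w)
    (hw : Measure.map (fun ω => WithLp.ofLp (w ω)) μP = Measure.pi (fun _ : Fin d => gaussianReal 0 1)) (i : Fin d) :
    Integrable (fun ω => (w ω i) ^ 2) μP :=
  w_coord_trans_int hwm hw i (measurable_id'.pow_const 2) gauss_integrable_sq

lemma w_coord_sq_mean (hwm : Measurable w)
    (hw : Measure.map (fun ω => WithLp.ofLp (w ω)) μP = Measure.pi (fun _ : Fin d => gaussianReal 0 1)) (i : Fin d) :
    ∫ ω, (w ω i) ^ 2 ∂μP = 1 := by
  rw [w_coord_trans_integral hwm hw i (measurable_id'.pow_const 2), gauss_integral_sq]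

end Wfacts

lemma euclid_norm_sq {d : ℕ} (y : EuclideanSpace ℝ (Fin d)) : ‖y‖ ^ 2 = ∑ i, (y i) ^ 2 := by
  rw [EuclideanSpace.norm_eq, Real.sq_sqrt (by positivity)]
  simp [sq_abs]

lemma euclid_inner_eq {d : ℕ} (a y : EuclideanSpace ℝ (Fin d)) :
    (inner ℝ a y : ℝ) = ∑ i, a i * y i := by
  simp [PiLp.inner_apply, RCLike.inner_apply, conj_trivial]
  exact Finset.sum_congr rfl fun _ _ => mul_comm _ _


end SGLDAux

set_option maxHeartbeats 1000000 in
theorem sgld_one_step_contraction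
    (d : ℕ) {Ω : Type*} [MeasurableSpace Ω] (μP : Measure Ω) [IsProbabilityMeasure μP]
    (u : EuclideanSpace ℝ (Fin d) → ℝ)
    (g : EuclideanSpace ℝ (Fin d) → EuclideanSpace ℝ (Fin d))
    (hgrad : ∀ x, HasGradientAt u (g x) x)
    (μ L : ℝ) (hμ : 0 < μ) (hμL : μ ≤ L)
    (hmono : ∀ x y, μ * ‖x - y‖ ^ 2 ≤ (inner ℝ (g x - g y) (x - y) : ℝ))
    (hcoco : ∀ x y, ‖g x - g y‖ ^ 2 ≤ L * (inner ℝ (g x - g y) (x - y) : ℝ))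
    (xstar : EuclideanSpace ℝ (Fin d)) (hstar : g xstar = 0)
    (η : ℝ) (hη : 0 < η) (hη2 : η ≤ 2 / L)
    (σ : ℝ) (hσ : 0 ≤ σ)
    (ξ w : Ω → EuclideanSpace ℝ (Fin d)) (hξm : Measurable ξ) (hwm : Measurable w)
    (hξint : Integrable ξ μP)
    (hξmean : ∫ ω, ξ ω ∂μP = 0)
    (hξvar : ∫ ω, ‖ξ ω‖ ^ 2 ∂μP ≤ σ ^ 2)
    (hw : Measure.map (fun ω => WithLp.ofLp (w ω)) μP = Measure.pi (fun _ : Fin d => gaussianReal 0 1))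
    (hindep : IndepFun ξ w μP)
    (x : EuclideanSpace ℝ (Fin d)) :
    ∫ ω, ‖(x - η • g x - η • ξ ω + Real.sqrt (2 * η) • w ω) - xstar‖ ^ 2 ∂μP
      ≤ (1 - 2 * μ * η * (1 - η * L / 2)) * ‖x - xstar‖ ^ 2
        + η ^ 2 * σ ^ 2 + 2 * η * d := by
  have hLpos : 0 < L := hμ.trans_le hμL
  have hηL : η * L ≤ 2 := by
    rw [le_div_iff₀ hLpos] at hη2; linarith
  have hcoeff : 0 ≤ 1 - 2 * μ * η * (1 - η * L / 2) := by
    have hnn : 0 ≤ 2 * η - η ^ 2 * L := by nlinarith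
    have h1 : μ * (2 * η - η ^ 2 * L) ≤ L * (2 * η - η ^ 2 * L) :=
      mul_le_mul_of_nonneg_right hμL hnn
    have h2 : L * (2 * η - η ^ 2 * L) ≤ 1 := by nlinarith [sq_nonneg (1 - η * L)]
    nlinarith
  set c := Real.sqrt (2 * η) with hc
  have hc0 : 0 ≤ c := Real.sqrt_nonneg _
  have hc2 : c ^ 2 = 2 * η := Real.sq_sqrt (by positivity)
  set a := x - η • g x - xstar with ha
  -- deterministic contraction
  have hinner : μ * ‖x - xstar‖ ^ 2 ≤ (inner ℝ (g x) (x - xstar) : ℝ) := by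
    simpa [hstar] using hmono x xstar
  have hcoco' : ‖g x‖ ^ 2 ≤ L * (inner ℝ (g x) (x - xstar) : ℝ) := by
    simpa [hstar] using hcoco x xstar
  have hdet : ‖a‖ ^ 2 ≤ (1 - 2 * μ * η * (1 - η * L / 2)) * ‖x - xstar‖ ^ 2 := by
    have hae : a = (x - xstar) - η • g x := by rw [ha]; abel
    have hexp : ‖a‖ ^ 2
        = ‖x - xstar‖ ^ 2 - 2 * η * (inner ℝ (g x) (x - xstar) : ℝ) + η ^ 2 * ‖g x‖ ^ 2 := by
      rw [hae, norm_sub_sq_real, real_inner_smul_right, real_inner_comm, norm_smul,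
        Real.norm_eq_abs, abs_of_nonneg hη.le]
      ring
    have hnn : 0 ≤ η * (2 - η * L) := mul_nonneg hη.le (by linarith)
    have p1 : η ^ 2 * ‖g x‖ ^ 2 ≤ η ^ 2 * (L * (inner ℝ (g x) (x - xstar) : ℝ)) :=
      mul_le_mul_of_nonneg_left hcoco' (sq_nonneg η)
    have p2 : (η * (2 - η * L)) * (μ * ‖x - xstar‖ ^ 2)
        ≤ (η * (2 - η * L)) * (inner ℝ (g x) (x - xstar) : ℝ) :=
      mul_le_mul_of_nonneg_left hinner hnn
    nlinarith [hexp, p1, p2]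
  -- w coordinate facts
  have hwiInt : ∀ i, Integrable (fun ω => w ω i) μP := fun i => w_coord_int hwm hw i
  have hwiMean : ∀ i, ∫ ω, w ω i ∂μP = 0 := fun i => w_coord_mean hwm hw i
  have hwi2Int : ∀ i, Integrable (fun ω => (w ω i) ^ 2) μP := fun i => w_coord_sq_int hwm hw i
  have hwi2Mean : ∀ i, ∫ ω, (w ω i) ^ 2 ∂μP = 1 := fun i => w_coord_sq_mean hwm hw i
  have hIw2 : Integrable (fun ω => ‖w ω‖ ^ 2) μP := by
    rw [show (fun ω => ‖w ω‖ ^ 2) = fun ω => ∑ i, (w ω i) ^ 2 from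
      funext fun ω => euclid_norm_sq (w ω)]
    exact integrable_finset_sum _ fun i _ => hwi2Int i
  have hIw2val : ∫ ω, ‖w ω‖ ^ 2 ∂μP = d := by
    rw [show (fun ω => ‖w ω‖ ^ 2) = fun ω => ∑ i, (w ω i) ^ 2 from
      funext fun ω => euclid_norm_sq (w ω)]
    rw [integral_finset_sum _ fun i _ => hwi2Int i]
    simp [hwi2Mean]
  -- ξ coordinate facts
  have hξiInt : ∀ i, Integrable (fun ω => ξ ω i) μP := fun i =>
    (EuclideanSpace.proj (𝕜 := ℝ) i).integrable_comp hξint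
  have hξiMean : ∀ i, ∫ ω, ξ ω i ∂μP = 0 := fun i => by
    have h := (EuclideanSpace.proj (𝕜 := ℝ) i).integral_comp_comm hξint
    rw [hξmean] at h
    simpa using h
  -- cross terms
  have hcrossInt : ∀ i, Integrable (fun ω => w ω i * ξ ω i) μP := fun i => by
    have hind : IndepFun (fun ω => w ω i) (fun ω => ξ ω i) μP :=
      (hindep.symm).comp ((measurable_pi_apply i).comp (WithLp.measurable_ofLp 2 _)) ((measurable_pi_apply i).comp (WithLp.measurable_ofLp 2 _))
    exact hind.integrable_mul (hwiInt i) (hξiInt i)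
  have hcross : ∀ i, ∫ ω, w ω i * ξ ω i ∂μP = 0 := fun i => by
    have hind : IndepFun (fun ω => w ω i) (fun ω => ξ ω i) μP :=
      (hindep.symm).comp ((measurable_pi_apply i).comp (WithLp.measurable_ofLp 2 _)) ((measurable_pi_apply i).comp (WithLp.measurable_ofLp 2 _))
    have h : ∫ ω, w ω i * ξ ω i ∂μP = (∫ ω, w ω i ∂μP) * ∫ ω, ξ ω i ∂μP :=
      hind.integral_mul_eq_mul_integral (hwiInt i).1 (hξiInt i).1
    rw [h, hwiMean i, zero_mul]
  -- inner product integrals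
  have hIaw : Integrable (fun ω => (inner ℝ a (w ω) : ℝ)) μP := by
    rw [show (fun ω => (inner ℝ a (w ω) : ℝ)) = fun ω => ∑ i, a i * w ω i from
      funext fun ω => euclid_inner_eq a (w ω)]
    exact integrable_finset_sum _ fun i _ => (hwiInt i).const_mul _
  have hIawval : ∫ ω, (inner ℝ a (w ω) : ℝ) ∂μP = 0 := by
    rw [show (fun ω => (inner ℝ a (w ω) : ℝ)) = fun ω => ∑ i, a i * w ω i from
      funext fun ω => euclid_inner_eq a (w ω)]
    rw [integral_finset_sum _ fun i _ => (hwiInt i).const_mul _]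
    simp [integral_const_mul, hwiMean]
  have hIaξ : Integrable (fun ω => (inner ℝ a (ξ ω) : ℝ)) μP :=
    (innerSL ℝ a).integrable_comp hξint
  have hIaξval : ∫ ω, (inner ℝ a (ξ ω) : ℝ) ∂μP = 0 := by
    rw [integral_inner hξint a, hξmean, inner_zero_right]
  have hIwξ : Integrable (fun ω => (inner ℝ (w ω) (ξ ω) : ℝ)) μP := by
    rw [show (fun ω => (inner ℝ (w ω) (ξ ω) : ℝ)) = fun ω => ∑ i, w ω i * ξ ω i from
      funext fun ω => euclid_inner_eq (w ω) (ξ ω)]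
    exact integrable_finset_sum _ fun i _ => hcrossInt i
  have hIwξval : ∫ ω, (inner ℝ (w ω) (ξ ω) : ℝ) ∂μP = 0 := by
    rw [show (fun ω => (inner ℝ (w ω) (ξ ω) : ℝ)) = fun ω => ∑ i, w ω i * ξ ω i from
      funext fun ω => euclid_inner_eq (w ω) (ξ ω)]
    rw [integral_finset_sum _ fun i _ => hcrossInt i]
    simp [hcross]
  -- pointwise expansion
  have hfun : ∀ ω, ‖(x - η • g x - η • ξ ω + c • w ω) - xstar‖ ^ 2
      = ‖a‖ ^ 2 + (2 * c) * (inner ℝ a (w ω) : ℝ) + (-(2 * η)) * (inner ℝ a (ξ ω) : ℝ)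
        + (2 * η) * ‖w ω‖ ^ 2 + (-(2 * c * η)) * (inner ℝ (w ω) (ξ ω) : ℝ)
        + η ^ 2 * ‖ξ ω‖ ^ 2 := by
    intro ω
    have hv : (x - η • g x - η • ξ ω + c • w ω) - xstar = a + (c • w ω - η • ξ ω) := by
      rw [ha]; abel
    rw [hv]
    have h1 : ∀ p : EuclideanSpace ℝ (Fin d), ‖p‖ ^ 2 = (inner ℝ p p : ℝ) := fun p =>
      (real_inner_self_eq_norm_sq p).symm
    simp only [h1, inner_add_left, inner_add_right, inner_sub_left, inner_sub_right,
      real_inner_smul_left, real_inner_smul_right]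
    rw [real_inner_comm (w ω) a, real_inner_comm (ξ ω) a, real_inner_comm (ξ ω) (w ω)]
    linear_combination (inner ℝ (w ω) (w ω) : ℝ) * hc2
  by_cases hIξ2 : Integrable (fun ω => ‖ξ ω‖ ^ 2) μP
  · -- integrable case
    have hT1 : Integrable (fun _ : Ω => ‖a‖ ^ 2) μP := integrable_const _
    have hT2 := hIaw.const_mul (2 * c)
    have hT3 := hIaξ.const_mul (-(2 * η))
    have hT4 := hIw2.const_mul (2 * η)
    have hT5 := hIwξ.const_mul (-(2 * c * η))
    have hT6 := hIξ2.const_mul (η ^ 2)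
    rw [show (fun ω => ‖(x - η • g x - η • ξ ω + c • w ω) - xstar‖ ^ 2)
        = fun ω => ‖a‖ ^ 2 + (2 * c) * (inner ℝ a (w ω) : ℝ) + (-(2 * η)) * (inner ℝ a (ξ ω) : ℝ)
          + (2 * η) * ‖w ω‖ ^ 2 + (-(2 * c * η)) * (inner ℝ (w ω) (ξ ω) : ℝ)
          + η ^ 2 * ‖ξ ω‖ ^ 2 from funext fun ω => hfun ω]
    have hS2 : Integrable (fun ω => ‖a‖ ^ 2 + (2 * c) * (inner ℝ a (w ω) : ℝ)) μP := hT1.add hT2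
    have hS3 : Integrable (fun ω => ‖a‖ ^ 2 + (2 * c) * (inner ℝ a (w ω) : ℝ)
        + (-(2 * η)) * (inner ℝ a (ξ ω) : ℝ)) μP := hS2.add hT3
    have hS4 : Integrable (fun ω => ‖a‖ ^ 2 + (2 * c) * (inner ℝ a (w ω) : ℝ)
        + (-(2 * η)) * (inner ℝ a (ξ ω) : ℝ) + (2 * η) * ‖w ω‖ ^ 2) μP := hS3.add hT4
    have hS5 : Integrable (fun ω => ‖a‖ ^ 2 + (2 * c) * (inner ℝ a (w ω) : ℝ)
        + (-(2 * η)) * (inner ℝ a (ξ ω) : ℝ) + (2 * η) * ‖w ω‖ ^ 2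
        + (-(2 * c * η)) * (inner ℝ (w ω) (ξ ω) : ℝ)) μP := hS4.add hT5
    rw [integral_add hS5 hT6,
      integral_add hS4 hT5,
      integral_add hS3 hT4,
      integral_add hS2 hT3,
      integral_add hT1 hT2,
      integral_const, integral_const_mul, integral_const_mul, integral_const_mul,
      integral_const_mul, integral_const_mul, hIawval, hIaξval, hIw2val, hIwξval]
    simp only [probReal_univ, measure_univ, ENNReal.toReal_one, smul_eq_mul, one_mul, mul_zero,
      add_zero, mul_one]
    have hb : η ^ 2 * ∫ ω, ‖ξ ω‖ ^ 2 ∂μP ≤ η ^ 2 * σ ^ 2 :=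
      mul_le_mul_of_nonneg_left hξvar (sq_nonneg η)
    linarith [hdet, hb]
  · -- non-integrable case: integral is zero
    have hnot : ¬ Integrable
        (fun ω => ‖(x - η • g x - η • ξ ω + c • w ω) - xstar‖ ^ 2) μP := by
      intro hI
      apply hIξ2
      have hbound := ((hI.add (integrable_const (‖a‖ ^ 2))).add
        (hIw2.const_mul (2 * η))).const_mul (3 / η ^ 2)
      have hmeas : AEStronglyMeasurable (fun ω => ‖ξ ω‖ ^ 2) μP :=
        (hξm.norm.pow_const 2).aestronglyMeasurable
      refine Integrable.mono' (f := fun ω => ‖ξ ω‖ ^ 2) hbound hmeas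
        (Filter.Eventually.of_forall fun ω => ?_)
      simp only [Pi.add_apply]
      rw [Real.norm_eq_abs, abs_of_nonneg (sq_nonneg _)]
      have hveq : η • ξ ω
          = (a + c • w ω) - ((x - η • g x - η • ξ ω + c • w ω) - xstar) := by
        rw [ha]; abel
      have hnorm : η * ‖ξ ω‖
          ≤ ‖a‖ + c * ‖w ω‖ + ‖(x - η • g x - η • ξ ω + c • w ω) - xstar‖ := by
        have e1 : η * ‖ξ ω‖ = ‖η • ξ ω‖ := by
          rw [norm_smul, Real.norm_eq_abs, abs_of_nonneg hη.le]
        have e2 : ‖a + c • w ω‖ ≤ ‖a‖ + c * ‖w ω‖ := by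
          have := norm_add_le a (c • w ω)
          rwa [norm_smul, Real.norm_eq_abs, abs_of_nonneg hc0] at this
        calc η * ‖ξ ω‖ = ‖η • ξ ω‖ := e1
          _ ≤ ‖a + c • w ω‖ + ‖(x - η • g x - η • ξ ω + c • w ω) - xstar‖ := by
              conv_lhs => rw [hveq]
              exact norm_sub_le (a + c • w ω) ((x - η • g x - η • ξ ω + c • w ω) - xstar)
          _ ≤ _ := by linarith
      rw [div_mul_eq_mul_div, le_div_iff₀ (by positivity : (0:ℝ) < η ^ 2)]
      generalize hgp : ‖a‖ = p at hnorm ⊢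
      generalize hgq : ‖w ω‖ = q at hnorm ⊢
      generalize hgr : ‖(x - η • g x - η • ξ ω + c • w ω) - xstar‖ = r at hnorm ⊢
      generalize hgn : ‖ξ ω‖ = n at hnorm ⊢
      have hp : 0 ≤ p := hgp ▸ norm_nonneg _
      have hq : 0 ≤ q := hgq ▸ norm_nonneg _
      have hn : 0 ≤ n := hgn ▸ norm_nonneg _
      have hsq : (η * n) ^ 2 ≤ (p + c * q + r) ^ 2 := by
        have h0 : 0 ≤ η * n := mul_nonneg hη.le hn
        nlinarith [hnorm]
      nlinarith [hsq, sq_nonneg (p - c * q), sq_nonneg (c * q - r), sq_nonneg (p - r), hc2]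
    rw [integral_undef hnot]
    have h1 : 0 ≤ (1 - 2 * μ * η * (1 - η * L / 2)) * ‖x - xstar‖ ^ 2 :=
      mul_nonneg hcoeff (sq_nonneg _)
    have h2 : 0 ≤ η ^ 2 * σ ^ 2 := by positivity
    have h3 : 0 ≤ 2 * η * (d : ℝ) := by positivity
    linarith
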